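/- arXiv:2007.15063 — 2 statements merged into one kernel-verified Lean document; each statement's English description precedes it below -/
import Mathlib

section
/- Let p and q be real numbers with p < 0 and q < 0. Then there do not exist continuously differentiable functions f, g : ℝ → ℝ such that f(0) > 0, g(0) = 0, f(1) > 0, g(1) < 0, and for all r ∈ [0, 1] both f(r)·g′(r) − f′(r)·g(r) > 0 and p·f′(r) + q·g′(r) < 0. -/
/-- Case 3 of Section 5: for `p < 0` and `q < 0`, no pair of C¹ functions can satisfy the
contact condition, the symplectic condition, and the prescribed boundary values. -/
theorem stmt_1 (p q : ℝ) (hp : p < 0) (hq : q < 0) :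
    ¬ ∃ (f g : ℝ → ℝ), ContDiff ℝ 1 f ∧ ContDiff ℝ 1 g ∧
      f 0 > 0 ∧ g 0 = 0 ∧ f 1 > 0 ∧ g 1 < 0 ∧
      (∀ r ∈ Set.Icc (0 : ℝ) 1,
        f r * deriv g r - deriv f r * g r > 0 ∧ p * deriv f r + q * deriv g r < 0) := by
  rintro ⟨f, g, hf, hg, hf0, hg0, hf1, hg1, hcond⟩
  have hfd : Differentiable ℝ f := hf.differentiable one_ne_zero
  have hgd : Differentiable ℝ g := hg.differentiable one_ne_zero
  set u : ℝ → ℝ := fun r => p * f r + q * g r with hu_def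
  set v : ℝ → ℝ := fun r => q * f r - p * g r with hv_def
  have hu : ∀ r, HasDerivAt u (p * deriv f r + q * deriv g r) r := fun r =>
    ((hfd r).hasDerivAt.const_mul p).add ((hgd r).hasDerivAt.const_mul q)
  have hv : ∀ r, HasDerivAt v (q * deriv f r - p * deriv g r) r := fun r =>
    ((hfd r).hasDerivAt.const_mul q).sub ((hgd r).hasDerivAt.const_mul p)
  have hucont : Continuous u := (continuous_const.mul hfd.continuous).add (continuous_const.mul hgd.continuous)
  have hvcont : Continuous v := (continuous_const.mul hfd.continuous).sub (continuous_const.mul hgd.continuous)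
  -- u is strictly decreasing on [0,1]
  have huanti : StrictAntiOn u (Set.Icc 0 1) := by
    apply strictAntiOn_of_deriv_neg (convex_Icc 0 1) hucont.continuousOn
    intro x hx
    rw [interior_Icc] at hx
    rw [(hu x).deriv]
    exact (hcond x ⟨hx.1.le, hx.2.le⟩).2
  have hu0 : u 0 < 0 := by
    have : u 0 = p * f 0 := by simp [hu_def, hg0]
    rw [this]
    exact mul_neg_of_neg_of_pos hp hf0
  have hune : ∀ r ∈ Set.Icc (0 : ℝ) 1, u r < 0 := by
    intro r hr
    rcases eq_or_lt_of_le hr.1 with h | h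
    · rwa [← h]
    · exact lt_trans (huanti (Set.left_mem_Icc.2 one_pos.le) hr h) hu0
  -- ψ = v / u is strictly decreasing on [0,1]
  set ψ : ℝ → ℝ := fun r => v r / u r with hψ_def
  have hψanti : StrictAntiOn ψ (Set.Icc 0 1) := by
    have hψcont : ContinuousOn ψ (Set.Icc 0 1) :=
      hvcont.continuousOn.div hucont.continuousOn (fun r hr => (hune r hr).ne)
    apply strictAntiOn_of_deriv_neg (convex_Icc 0 1) hψcont
    intro x hx
    rw [interior_Icc] at hx
    have hx' : x ∈ Set.Icc (0 : ℝ) 1 := ⟨hx.1.le, hx.2.le⟩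
    have hune' : u x ≠ 0 := (hune x hx').ne
    have hd : HasDerivAt ψ
        (((q * deriv f x - p * deriv g x) * u x - v x * (p * deriv f x + q * deriv g x))
          / (u x) ^ 2) x := (hv x).div (hu x) hune'
    rw [hd.deriv]
    apply div_neg_of_neg_of_pos
    · have hc := (hcond x hx').1
      have hrw : (q * deriv f x - p * deriv g x) * u x
          - v x * (p * deriv f x + q * deriv g x)
          = -(p ^ 2 + q ^ 2) * (f x * deriv g x - deriv f x * g x) := by
        simp only [hu_def, hv_def]; ring
      rw [hrw]
      have hpq : 0 < p ^ 2 + q ^ 2 := by nlinarith [mul_pos_of_neg_of_neg hp hp, sq_nonneg q]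
      nlinarith
    · exact lt_of_le_of_ne (sq_nonneg _) (Ne.symm (pow_ne_zero 2 hune'))
  have hu1 : u 1 < 0 := hune 1 ⟨one_pos.le, le_rfl⟩
  have h01 : ψ 1 < ψ 0 :=
    hψanti (Set.left_mem_Icc.2 one_pos.le) (Set.right_mem_Icc.2 one_pos.le) one_pos
  have h01' : v 1 / u 1 < v 0 / u 0 := h01
  rw [← neg_div_neg_eq (v 1) (u 1), ← neg_div_neg_eq (v 0) (u 0),
    div_lt_div_iff₀ (neg_pos.2 hu1) (neg_pos.2 hu0)] at h01'
  simp only [hu_def, hv_def, hg0] at h01'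
  nlinarith [mul_pos (mul_pos_of_neg_of_neg hp hp) (mul_pos hf0 (neg_pos.mpr hg1)),
    mul_pos (mul_pos_of_neg_of_neg hq hq) (mul_pos hf0 (neg_pos.mpr hg1))]
end

section
/- Let f, g : ℝ → ℝ be continuously differentiable functions with f(0) > 0, g(0) = 0, f(1) > 0, g(1) < 0, and f(t)·g′(t) − f′(t)·g(t) > 0 for all t ∈ [0, 1]. Then there exist t₁, t₂ with 0 < t₁ < t₂ < 1 such that f(t₁) = 0 and g(t₁) > 0, and g(t₂) = 0 and f(t₂) < 0. -/
open Set

/-- If the derivative of `g` is positive at `x`, and `g` is `C¹`, then `g` is strictly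
monotone on some closed interval `[x - δ, x + δ]`. -/
lemma aux_strictMono (g : ℝ → ℝ) (hg : ContDiff ℝ 1 g) (x : ℝ) (hx : 0 < deriv g x) :
    ∃ δ > 0, StrictMonoOn g (Icc (x - δ) (x + δ)) := by
  have hev : ∀ᶠ t in nhds x, 0 < deriv g t :=
    continuousAt_const.eventually_lt (hg.continuous_deriv le_rfl).continuousAt hx
  rcases Metric.eventually_nhds_iff.mp hev with ⟨ε, hε, hball⟩
  refine ⟨ε / 2, by linarith, ?_⟩
  apply strictMonoOn_of_deriv_pos (convex_Icc _ _) (hg.continuous.continuousOn)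
  intro t ht
  rw [interior_Icc] at ht
  apply hball
  rw [Real.dist_eq, abs_lt]
  constructor <;> [linarith [ht.1]; linarith [ht.2]]

/-- A plane curve `(f, g)` satisfying the contact condition `f g′ − f′ g > 0` on `[0,1]`
that starts on the positive x-axis and ends in the open fourth quadrant must first cross
the positive y-axis and then the negative x-axis. -/
theorem stmt_2 (f g : ℝ → ℝ) (hf : ContDiff ℝ 1 f) (hg : ContDiff ℝ 1 g)
    (h0f : f 0 > 0) (h0g : g 0 = 0) (h1f : f 1 > 0) (h1g : g 1 < 0)
    (hcontact : ∀ t ∈ Set.Icc (0 : ℝ) 1, f t * deriv g t - deriv f t * g t > 0) :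
    ∃ t₁ t₂ : ℝ, 0 < t₁ ∧ t₁ < t₂ ∧ t₂ < 1 ∧
      f t₁ = 0 ∧ g t₁ > 0 ∧ g t₂ = 0 ∧ f t₂ < 0 := by
  have hgc : Continuous g := hg.continuous
  have hfc : Continuous f := hf.continuous
  -- deriv g 0 > 0
  have hc0 := hcontact 0 ⟨le_refl 0, zero_le_one⟩
  rw [h0g] at hc0
  have hg'0 : 0 < deriv g 0 := by
    nlinarith
  obtain ⟨δ₀, hδ₀, hmono0⟩ := aux_strictMono g hg 0 hg'0
  -- choose δ ∈ (0, 1) with g > 0 on (0, δ]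
  set δ : ℝ := min δ₀ (1/2) with hδdef
  have hδpos : 0 < δ := lt_min hδ₀ (by norm_num)
  have hδlt1 : δ < 1 := lt_of_le_of_lt (min_le_right _ _) (by norm_num)
  have hgposδ : ∀ t, 0 < t → t ≤ δ → 0 < g t := by
    intro t ht htδ
    have h1 : (0:ℝ) ∈ Icc (0 - δ₀) (0 + δ₀) := by
      constructor <;> simp [le_of_lt hδ₀]
    have h2 : t ∈ Icc (0 - δ₀) (0 + δ₀) := by
      constructor
      · linarith
      · have := le_trans htδ (min_le_left δ₀ (1/2 : ℝ))
        linarith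
    have := hmono0 h1 h2 ht
    rwa [h0g] at this
  have hgδ : 0 < g δ := hgposδ δ hδpos le_rfl
  -- the set of zeros of g in [δ, 1]
  set Z : Set ℝ := {t | t ∈ Icc δ 1 ∧ g t = 0} with hZdef
  have hZclosed : IsClosed Z := by
    have : Z = Icc δ 1 ∩ g ⁻¹' {0} := by
      ext t; simp [hZdef, Set.mem_setOf_eq, Set.mem_inter_iff]
    rw [this]
    exact isClosed_Icc.inter (isClosed_singleton.preimage hgc)
  have hZne : Z.Nonempty := by
    have h01 : δ ≤ 1 := le_of_lt hδlt1
    have : (0:ℝ) ∈ Icc (g 1) (g δ) := ⟨le_of_lt h1g, le_of_lt hgδ⟩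
    obtain ⟨t, ht, hgt⟩ := intermediate_value_Icc' h01 hgc.continuousOn this
    exact ⟨t, ht, hgt⟩
  have hZbdd : BddBelow Z := ⟨δ, fun t ht => ht.1.1⟩
  set t₂ : ℝ := sInf Z with ht₂def
  have ht₂mem : t₂ ∈ Z := hZclosed.csInf_mem hZne hZbdd
  have hgt₂ : g t₂ = 0 := ht₂mem.2
  have ht₂ge : δ ≤ t₂ := ht₂mem.1.1
  have ht₂le : t₂ ≤ 1 := ht₂mem.1.2
  have ht₂pos : 0 < t₂ := lt_of_lt_of_le hδpos ht₂ge
  have ht₂lt1 : t₂ < 1 := by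
    rcases lt_or_eq_of_le ht₂le with h | h
    · exact h
    · rw [h] at hgt₂; linarith
  -- g > 0 on (0, t₂)
  have hgpos : ∀ t, 0 < t → t < t₂ → 0 < g t := by
    intro t ht htt₂
    rcases le_or_gt t δ with h | h
    · exact hgposδ t ht h
    · by_contra hle
      push_neg at hle
      have h0mem : (0:ℝ) ∈ Icc (g t) (g δ) := ⟨hle, le_of_lt hgδ⟩
      obtain ⟨s, hs, hgs⟩ := intermediate_value_Icc' (le_of_lt h) hgc.continuousOn h0mem
      have hsZ : s ∈ Z := ⟨⟨hs.1, le_trans hs.2 (le_of_lt (lt_trans htt₂ ht₂lt1))⟩, hgs⟩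
      have := csInf_le hZbdd hsZ
      have : t₂ ≤ t := le_trans this hs.2
      linarith
  -- contact at t₂ gives f t₂ * deriv g t₂ > 0
  have hct₂ := hcontact t₂ ⟨le_of_lt ht₂pos, ht₂le⟩
  rw [hgt₂] at hct₂
  have hfg' : 0 < f t₂ * deriv g t₂ := by nlinarith
  -- deriv g t₂ < 0
  have hg't₂ : deriv g t₂ < 0 := by
    rcases lt_trichotomy (deriv g t₂) 0 with h | h | h
    · exact h
    · rw [h] at hfg'; simp at hfg'
    · exfalso
      obtain ⟨η, hη, hmono⟩ := aux_strictMono g hg t₂ h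
      set a : ℝ := max (t₂ - η) (t₂ / 2) with hadef
      have halt : a < t₂ := by
        apply max_lt <;> linarith
      have hapos : 0 < a := lt_of_lt_of_le (by linarith) (le_max_right _ _)
      have hamem : a ∈ Icc (t₂ - η) (t₂ + η) := ⟨le_max_left _ _, by linarith⟩
      have ht₂mem' : t₂ ∈ Icc (t₂ - η) (t₂ + η) := ⟨by linarith, by linarith⟩
      have := hmono hamem ht₂mem' halt
      rw [hgt₂] at this
      exact absurd (hgpos a hapos halt) (by linarith)
  have hft₂ : f t₂ < 0 := by nlinarith
  -- IVT for f on [0, t₂]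
  have h0mem : (0:ℝ) ∈ Icc (f t₂) (f 0) := ⟨le_of_lt hft₂, le_of_lt h0f⟩
  obtain ⟨t₁, ht₁, hft₁⟩ := intermediate_value_Icc' (le_of_lt ht₂pos) hfc.continuousOn h0mem
  have ht₁pos : 0 < t₁ := by
    rcases lt_or_eq_of_le ht₁.1 with h | h
    · exact h
    · rw [← h] at hft₁; linarith
  have ht₁lt : t₁ < t₂ := by
    rcases lt_or_eq_of_le ht₁.2 with h | h
    · exact h
    · rw [h] at hft₁; linarith
  exact ⟨t₁, t₂, ht₁pos, ht₁lt, ht₂lt1, hft₁, hgpos t₁ ht₁pos ht₁lt, hgt₂, hft₂⟩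
end
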